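/- (Error bound of distance estimation) Fix reals L < U, t > 0, ε > 0 and β ∈ (0, 2), and set μ = U − L + 2t. Let x_1, x_2 ∈ [L, U] with d_E = |x_1 − x_2| ≤ 2t, let d_H be the Hamming distance between the DPBV encodings of x_1 and x_2, and define the estimator d̂_E = (μ/(2s)) · ((e^ε + 1)/(e^ε − 1))^2 · d_H − μ e^ε/(e^ε − 1)^2. Then with probability at least 1 − β, |d̂_E − d_E| ≤ (μ/2) · ((e^ε + 1)/(e^ε − 1))^2 · √( ln(2/β) / (2s) ). -/

import Mathlib

open MeasureTheory ProbabilityTheory Real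

/-- The BV hash: `h_{r,t}(x) = 1` if `x ∈ [r - t, r + t]` and `0` otherwise. -/
noncomputable def bvHash (t r x : ℝ) : ℕ := if x ∈ Set.Icc (r - t) (r + t) then 1 else 0

/-- The uniform probability measure on the interval `[a, b]`. -/
noncomputable def uniformIcc (a b : ℝ) : Measure ℝ :=
  (ENNReal.ofReal (b - a))⁻¹ • (volume.restrict (Set.Icc a b))

/-- A DPBV bit: the BV hash bit `bvHash t r x` XOR-ed with the flip indicator `flip ∈ {0,1}`. -/
noncomputable def dpbvBit (t r x flip : ℝ) : ℕ :=
  if flip = 1 then 1 - bvHash t r x else bvHash t r x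

/-- The (random) Hamming distance between the DPBV encodings of `x₁` (with flips `f`) and `x₂`
(with flips `g`): the number of coordinates in which they differ. -/
noncomputable def dpbvHammingDist (t : ℝ) {s : ℕ} {Ω : Type*}
    (r f g : Fin s → Ω → ℝ) (x₁ x₂ : ℝ) (ω : Ω) : ℕ :=
  (Finset.univ.filter fun i =>
    dpbvBit t (r i ω) x₁ (f i ω) ≠ dpbvBit t (r i ω) x₂ (g i ω)).card

/-- The (random) DPBV Euclidean distance estimator
`d̂_E = (μ/(2s)) · ((e^ε + 1)/(e^ε − 1))² · d_H − μ·e^ε/(e^ε − 1)²`. -/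
noncomputable def dpbvEstimator (t μ ε : ℝ) {s : ℕ} {Ω : Type*}
    (r f g : Fin s → Ω → ℝ) (x₁ x₂ : ℝ) (ω : Ω) : ℝ :=
  μ / (2 * s) * ((exp ε + 1) / (exp ε - 1)) ^ 2 * (dpbvHammingDist t r f g x₁ x₂ ω : ℝ)
    - μ * exp ε / (exp ε - 1) ^ 2

set_option linter.unusedSectionVars false
set_option linter.unnecessarySimpa false
set_option linter.unusedTactic false
set_option linter.unusedVariables false

section Helpers

lemma bernoulli_mgf_le {p : ℝ} (hp0 : 0 ≤ p) (hp1 : p ≤ 1) (l : ℝ) :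
    (1 - p) * Real.exp (l * (0 - p)) + p * Real.exp (l * (1 - p)) ≤ Real.exp (l ^ 2 / 8) := by
  set D : ℝ → ℝ := fun y => 1 - p + p * exp y with hDdef
  have hDpos : ∀ y, 0 < D y := by
    intro y
    rcases eq_or_lt_of_le hp1 with h | h
    · simp only [hDdef, h]; simpa using exp_pos y
    · have h2 : 0 ≤ p * exp y := mul_nonneg hp0 (exp_pos y).le
      simp only [hDdef]; linarith
  set g' : ℝ → ℝ := fun y => y / 4 + p - p * exp y / D y with hg'def
  set g : ℝ → ℝ := fun y => y ^ 2 / 8 + y * p - log (D y) with hgdef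
  have hD : ∀ y, HasDerivAt D (p * exp y) y := by
    intro y
    exact ((hasDerivAt_exp y).const_mul p).const_add (1 - p)
  have hgd : ∀ y, HasDerivAt g (g' y) y := by
    intro y
    have h1 : HasDerivAt (fun y : ℝ => y ^ 2 / 8 + y * p) (y / 4 + p) y := by
      have := ((hasDerivAt_pow 2 y).div_const 8).add ((hasDerivAt_id y).mul_const p)
      exact this.congr_deriv (by push_cast; ring)
    have h2 : HasDerivAt (fun y => log (D y)) (p * exp y / D y) y :=
      (hD y).log (hDpos y).ne'
    exact h1.sub h2
  have hg'd : ∀ y, HasDerivAt g'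
      (1 / 4 - (p * exp y * D y - p * exp y * (p * exp y)) / D y ^ 2) y := by
    intro y
    have h1 : HasDerivAt (fun y : ℝ => y / 4 + p) (1 / 4) y := by
      simpa using ((hasDerivAt_id y).div_const 4).add_const p
    have h2 : HasDerivAt (fun y => p * exp y / D y)
        ((p * exp y * D y - p * exp y * (p * exp y)) / D y ^ 2) y :=
      (((hasDerivAt_exp y).const_mul p)).div (hD y) (hDpos y).ne'
    exact h1.sub h2
  have hg''nonneg : ∀ y, 0 ≤ 1 / 4 - (p * exp y * D y - p * exp y * (p * exp y)) / D y ^ 2 := by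
    intro y
    rw [sub_nonneg, div_le_iff₀ (pow_pos (hDpos y) 2)]
    have hr : 1 / 4 * D y ^ 2 - (p * exp y * D y - p * exp y * (p * exp y))
        = (D y - 2 * p * exp y) ^ 2 / 4 := by ring
    have := sq_nonneg (D y - 2 * p * exp y)
    nlinarith [hr, this, sq_nonneg (D y - 2 * p * exp y)]
  have hg'mono : Monotone g' :=
    monotone_of_deriv_nonneg (fun y => (hg'd y).differentiableAt)
      (fun y => by rw [(hg'd y).deriv]; exact hg''nonneg y)
  have hg'0 : g' 0 = 0 := by
    simp only [hg'def, hDdef]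
    norm_num
  have hg0 : g 0 = 0 := by
    simp only [hgdef, hDdef]
    norm_num
  have hgdiff : Differentiable ℝ g := fun y => (hgd y).differentiableAt
  have hgnonneg : ∀ y, 0 ≤ g y := by
    intro y
    rcases le_or_gt 0 y with hy | hy
    · have hmono : MonotoneOn g (Set.Ici 0) := by
        apply monotoneOn_of_deriv_nonneg (convex_Ici 0) hgdiff.continuous.continuousOn
          hgdiff.differentiableOn
        intro x hx
        rw [interior_Ici] at hx
        rw [(hgd x).deriv]
        rw [← hg'0]
        exact hg'mono hx.le
      rw [← hg0]
      exact hmono Set.self_mem_Ici hy hy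
    · have hanti : AntitoneOn g (Set.Iic 0) := by
        apply antitoneOn_of_deriv_nonpos (convex_Iic 0) hgdiff.continuous.continuousOn
          hgdiff.differentiableOn
        intro x hx
        rw [interior_Iic] at hx
        rw [(hgd x).deriv]
        rw [← hg'0]
        exact hg'mono hx.le
      rw [← hg0]
      exact hanti hy.le Set.self_mem_Iic hy.le
  -- conclude
  have hgl := hgnonneg l
  have hlog : log (D l) ≤ l ^ 2 / 8 + l * p := by
    simp only [hgdef] at hgl; linarith
  have hDle : D l ≤ exp (l ^ 2 / 8 + l * p) := by
    rw [← Real.exp_log (hDpos l)]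
    exact Real.exp_le_exp.mpr hlog
  have key : (1 - p) * Real.exp (l * (0 - p)) + p * Real.exp (l * (1 - p))
      = exp (- (l * p)) * D l := by
    simp only [hDdef]
    have e1 : l * (0 - p) = -(l * p) := by ring
    have e2 : l * (1 - p) = -(l * p) + l := by ring
    rw [e1, e2, Real.exp_add]
    ring
  rw [key]
  calc exp (-(l*p)) * D l ≤ exp (-(l*p)) * exp (l ^ 2 / 8 + l * p) := by
        exact mul_le_mul_of_nonneg_left hDle (exp_pos _).le
  _ = exp (l ^ 2 / 8) := by rw [← Real.exp_add]; ring_nf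

variable {Ω : Type*} [MeasurableSpace Ω] {P : Measure Ω} [IsProbabilityMeasure P]

lemma bit_integral {Z : Ω → ℝ} (hmeas : Measurable Z)
    (h01 : ∀ ω, Z ω = 0 ∨ Z ω = 1) {p : ℝ}
    (hlaw : P {ω | Z ω = 1} = ENNReal.ofReal p) (hp0 : 0 ≤ p) :
    Integrable Z P ∧ ∫ ω, Z ω ∂P = p := by
  have hA : MeasurableSet {ω | Z ω = 1} := hmeas (measurableSet_singleton 1)
  have hrepr : Z = Set.indicator {ω | Z ω = 1} (fun _ => (1:ℝ)) := by
    funext ω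
    rcases h01 ω with h | h
    · rw [h, Set.indicator_of_notMem]
      simp [Set.mem_setOf_eq, h]
    · rw [h, Set.indicator_of_mem]
      simpa [Set.mem_setOf_eq] using h
  constructor
  · rw [hrepr]
    exact (integrable_const (1:ℝ)).indicator hA
  · rw [hrepr, integral_indicator_const _ hA, measureReal_def, hlaw]
    simp [ENNReal.toReal_ofReal hp0]

lemma bit_mgf {Z : Ω → ℝ} (hmeas : Measurable Z)
    (h01 : ∀ ω, Z ω = 0 ∨ Z ω = 1) {p : ℝ}
    (hlaw : P {ω | Z ω = 1} = ENNReal.ofReal p) (hp0 : 0 ≤ p) (l : ℝ) :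
    mgf (fun ω => Z ω - p) P l
      = (1 - p) * Real.exp (l * (0 - p)) + p * Real.exp (l * (1 - p)) := by
  obtain ⟨hint, hEZ⟩ := bit_integral hmeas h01 hlaw hp0
  have hrepr : ∀ ω, Real.exp (l * (Z ω - p))
      = Real.exp (-(l * p)) + (Real.exp (l * (1 - p)) - Real.exp (-(l * p))) * Z ω := by
    intro ω
    rcases h01 ω with h | h <;> rw [h] <;> ring_nf
  rw [mgf]
  rw [integral_congr_ae (Filter.Eventually.of_forall hrepr)]
  rw [integral_add (integrable_const _) (hint.const_mul _), integral_const, integral_const_mul, hEZ]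
  simp only [measureReal_def, measure_univ, ENNReal.toReal_one, smul_eq_mul, one_mul]
  ring_nf

lemma bits_mgf_sum_le {s : ℕ} {Z : Fin s → Ω → ℝ} (hmeas : ∀ i, Measurable (Z i))
    (h01 : ∀ i ω, Z i ω = 0 ∨ Z i ω = 1) {p : ℝ}
    (hlaw : ∀ i, P {ω | Z i ω = 1} = ENNReal.ofReal p) (hp0 : 0 ≤ p) (hp1 : p ≤ 1)
    (hind : ∀ (S : Finset (Fin s)), ∀ j ∉ S,
      IndepFun (fun ω => ∑ i ∈ S, Z i ω) (Z j) P) (l : ℝ) :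
    ∀ S : Finset (Fin s),
      mgf (fun ω => ∑ i ∈ S, (Z i ω - p)) P l ≤ Real.exp (l ^ 2 / 8) ^ S.card := by
  intro S
  induction S using Finset.induction_on with
  | empty =>
      simp only [Finset.sum_empty, Finset.card_empty, pow_zero]
      simpa using (mgf_const (μ := P) (t := l) 0).le
  | @insert j S hj ih =>
      have hindS : IndepFun (fun ω => Z j ω - p) (fun ω => ∑ i ∈ S, (Z i ω - p)) P := by
        have h1 : IndepFun (fun ω => ∑ i ∈ S, Z i ω) (Z j) P := hind S j hj
        have h2 := (h1.symm.comp (measurable_id.sub_const p)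
          (measurable_id.sub_const ((S.card : ℝ) * p)))
        have e1 : ((fun x : ℝ => id x - p) ∘ (Z j)) = fun ω => Z j ω - p := rfl
        have e2 : ((fun x : ℝ => id x - (S.card : ℝ) * p) ∘ (fun ω => ∑ i ∈ S, Z i ω))
            = fun ω => ∑ i ∈ S, (Z i ω - p) := by
          funext ω
          simp [Function.comp, Finset.sum_sub_distrib]
        rwa [e1, e2] at h2
      have hadd : (fun ω => ∑ i ∈ insert j S, (Z i ω - p))
          = (fun ω => Z j ω - p) + (fun ω => ∑ i ∈ S, (Z i ω - p)) := by
        funext ω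
        simp [Finset.sum_insert hj]
      rw [hadd, hindS.mgf_add' ((hmeas j).sub_const p).aestronglyMeasurable
        (by exact (Finset.measurable_sum S fun i _ => (hmeas i).sub_const p).aestronglyMeasurable)]
      rw [Finset.card_insert_of_notMem hj, pow_succ]
      have hb : mgf (fun ω => Z j ω - p) P l ≤ Real.exp (l ^ 2 / 8) := by
        rw [bit_mgf (hmeas j) (h01 j) (hlaw j) hp0]
        exact bernoulli_mgf_le hp0 hp1 l
      calc mgf (fun ω => Z j ω - p) P l * mgf (fun ω => ∑ i ∈ S, (Z i ω - p)) P l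
          ≤ Real.exp (l ^ 2 / 8) * Real.exp (l ^ 2 / 8) ^ S.card :=
            mul_le_mul hb ih mgf_nonneg (Real.exp_pos _).le
        _ = Real.exp (l ^ 2 / 8) ^ S.card * Real.exp (l ^ 2 / 8) := by ring

lemma bits_tail_upper {s : ℕ} {Z : Fin s → Ω → ℝ} (hmeas : ∀ i, Measurable (Z i))
    (h01 : ∀ i ω, Z i ω = 0 ∨ Z i ω = 1) {p : ℝ}
    (hlaw : ∀ i, P {ω | Z i ω = 1} = ENNReal.ofReal p) (hp0 : 0 ≤ p) (hp1 : p ≤ 1)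
    (hind : ∀ (S : Finset (Fin s)), ∀ j ∉ S,
      IndepFun (fun ω => ∑ i ∈ S, Z i ω) (Z j) P) {δ : ℝ} (hδ : 0 ≤ δ) :
    P {ω | (s : ℝ) * p + s * δ ≤ ∑ i, Z i ω} ≤ ENNReal.ofReal (Real.exp (-(2 * s * δ ^ 2))) := by
  set X : Ω → ℝ := fun ω => ∑ i, (Z i ω - p) with hXdef
  have hXmeas : Measurable X := Finset.measurable_sum _ fun i _ => (hmeas i).sub_const p
  have hXeq : ∀ ω, X ω = (∑ i, Z i ω) - s * p := by
    intro ω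
    simp [hXdef, Finset.sum_sub_distrib, Finset.card_univ]
  have hset : {ω | (s : ℝ) * p + s * δ ≤ ∑ i, Z i ω} = {ω | (s : ℝ) * δ ≤ X ω} := by
    ext ω
    simp only [Set.mem_setOf_eq, hXeq]
    constructor <;> intro h <;> linarith
  have hXabs : ∀ ω, |X ω| ≤ 2 * s := by
    intro ω
    calc |X ω| ≤ ∑ i, |Z i ω - p| := Finset.abs_sum_le_sum_abs _ _
    _ ≤ ∑ _i : Fin s, (2 : ℝ) := by
        refine Finset.sum_le_sum fun i _ => ?_
        rcases h01 i ω with h | h <;> rw [h] <;>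
          exact abs_le.mpr ⟨by linarith, by linarith⟩
    _ = 2 * s := by simp [Finset.card_univ, mul_comm]
  have hint : ∀ u : ℝ, Integrable (fun ω => Real.exp (u * X ω)) P := by
    intro u
    refine Integrable.mono' (integrable_const (Real.exp (|u| * (2 * s))))
      ((Real.measurable_exp.comp (measurable_const.mul hXmeas)).aestronglyMeasurable)
      (Filter.Eventually.of_forall fun ω => ?_)
    rw [Real.norm_eq_abs, abs_of_pos (Real.exp_pos _), Real.exp_le_exp]
    calc u * X ω ≤ |u * X ω| := le_abs_self _
    _ = |u| * |X ω| := abs_mul _ _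
    _ ≤ |u| * (2 * s) := by
        exact mul_le_mul_of_nonneg_left (hXabs ω) (abs_nonneg u)
  have hchernoff := measure_ge_le_exp_mul_mgf (μ := P) (X := X) ((s : ℝ) * δ)
    (by positivity : (0:ℝ) ≤ 4 * δ) (hint (4 * δ))
  have hmgf : mgf X P (4 * δ) ≤ Real.exp (2 * δ ^ 2) ^ s := by
    have := bits_mgf_sum_le hmeas h01 hlaw hp0 hp1 hind (4 * δ) Finset.univ
    simp only [Finset.card_univ, Fintype.card_fin] at this
    calc mgf X P (4 * δ) ≤ Real.exp ((4 * δ) ^ 2 / 8) ^ s := this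
    _ = Real.exp (2 * δ ^ 2) ^ s := by norm_num; ring_nf
  have hbound : Real.exp (-(4 * δ) * ((s:ℝ) * δ)) * Real.exp (2 * δ ^ 2) ^ s
      = Real.exp (-(2 * s * δ ^ 2)) := by
    rw [← Real.exp_nat_mul, ← Real.exp_add]
    ring_nf
  rw [hset]
  rw [ENNReal.le_ofReal_iff_toReal_le (measure_ne_top P _) (Real.exp_pos _).le]
  calc (P {ω | (s : ℝ) * δ ≤ X ω}).toReal
      ≤ Real.exp (-(4 * δ) * ((s:ℝ) * δ)) * mgf X P (4 * δ) := hchernoff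
  _ ≤ Real.exp (-(4 * δ) * ((s:ℝ) * δ)) * Real.exp (2 * δ ^ 2) ^ s := by
      exact mul_le_mul_of_nonneg_left hmgf (Real.exp_pos _).le
  _ = Real.exp (-(2 * s * δ ^ 2)) := hbound

lemma bits_tail_lower {s : ℕ} {Z : Fin s → Ω → ℝ} (hmeas : ∀ i, Measurable (Z i))
    (h01 : ∀ i ω, Z i ω = 0 ∨ Z i ω = 1) {p : ℝ}
    (hlaw : ∀ i, P {ω | Z i ω = 1} = ENNReal.ofReal p) (hp0 : 0 ≤ p) (hp1 : p ≤ 1)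
    (hind : ∀ (S : Finset (Fin s)), ∀ j ∉ S,
      IndepFun (fun ω => ∑ i ∈ S, Z i ω) (Z j) P) {δ : ℝ} (hδ : 0 ≤ δ) :
    P {ω | ∑ i, Z i ω ≤ (s : ℝ) * p - s * δ} ≤ ENNReal.ofReal (Real.exp (-(2 * s * δ ^ 2))) := by
  set W : Fin s → Ω → ℝ := fun i ω => 1 - Z i ω with hWdef
  have hWmeas : ∀ i, Measurable (W i) := fun i => measurable_const.sub (hmeas i)
  have hW01 : ∀ i ω, W i ω = 0 ∨ W i ω = 1 := by
    intro i ω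
    rcases h01 i ω with h | h <;> simp [hWdef, h]
  have hWlaw : ∀ i, P {ω | W i ω = 1} = ENNReal.ofReal (1 - p) := by
    intro i
    have hseteq : {ω | W i ω = 1} = {ω | Z i ω = 1}ᶜ := by
      ext ω
      rcases h01 i ω with h | h <;> simp [hWdef, h]
    have hms : MeasurableSet {ω | Z i ω = 1} := hmeas i (measurableSet_singleton 1)
    rw [hseteq, prob_compl_eq_one_sub hms, hlaw i]
    rw [ENNReal.ofReal_sub 1 hp0]
    simp
  have hWind : ∀ (S : Finset (Fin s)), ∀ j ∉ S,
      IndepFun (fun ω => ∑ i ∈ S, W i ω) (W j) P := by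
    intro S j hj
    have e1 : (((fun x : ℝ => (S.card : ℝ)) - id) ∘ fun ω => ∑ i ∈ S, Z i ω)
        = fun ω => ∑ i ∈ S, W i ω := by
      funext ω
      simp [Function.comp, hWdef, Finset.sum_sub_distrib]
    have e2 : (((fun x : ℝ => (1:ℝ)) - id) ∘ Z j) = W j := rfl
    have h2 := (hind S j hj).comp
      (measurable_const.sub measurable_id : Measurable fun x : ℝ => (S.card : ℝ) - id x)
      (measurable_const.sub measurable_id : Measurable fun x : ℝ => 1 - id x)
    rwa [e1, e2] at h2
  have := bits_tail_upper hWmeas hW01 hWlaw (by linarith) (by linarith) hWind hδ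
  have hseteq : {ω | (s : ℝ) * (1 - p) + s * δ ≤ ∑ i, W i ω}
      = {ω | ∑ i, Z i ω ≤ (s : ℝ) * p - s * δ} := by
    ext ω
    have : ∑ i, W i ω = (s : ℝ) - ∑ i, Z i ω := by
      simp [hWdef, Finset.sum_sub_distrib, Finset.card_univ]
    simp only [Set.mem_setOf_eq, this]
    constructor <;> intro h <;> linarith
  rwa [hseteq] at this

lemma bits_concentration {s : ℕ} {Z : Fin s → Ω → ℝ} (hmeas : ∀ i, Measurable (Z i))
    (h01 : ∀ i ω, Z i ω = 0 ∨ Z i ω = 1) {p : ℝ}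
    (hlaw : ∀ i, P {ω | Z i ω = 1} = ENNReal.ofReal p) (hp0 : 0 ≤ p) (hp1 : p ≤ 1)
    (hind : ∀ (S : Finset (Fin s)), ∀ j ∉ S,
      IndepFun (fun ω => ∑ i ∈ S, Z i ω) (Z j) P) {δ : ℝ} (hδ : 0 ≤ δ) :
    ENNReal.ofReal (1 - 2 * Real.exp (-(2 * s * δ ^ 2)))
      ≤ P {ω | |(∑ i, Z i ω) - (s : ℝ) * p| ≤ s * δ} := by
  set A := {ω | |(∑ i, Z i ω) - (s : ℝ) * p| ≤ s * δ} with hAdef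
  have hsummeas : Measurable fun ω => ∑ i, Z i ω := Finset.measurable_sum _ fun i _ => hmeas i
  have hAmeas : MeasurableSet A := by
    apply measurableSet_le ((hsummeas.sub_const _).abs) measurable_const
  have hcompl : Aᶜ ⊆ {ω | (s : ℝ) * p + s * δ ≤ ∑ i, Z i ω}
      ∪ {ω | ∑ i, Z i ω ≤ (s : ℝ) * p - s * δ} := by
    intro ω hω
    simp only [hAdef, Set.mem_compl_iff, Set.mem_setOf_eq, not_le] at hω
    rcases lt_abs.mp hω with h | h
    · exact Set.mem_union_left _ (by simp only [Set.mem_setOf_eq]; linarith)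
    · exact Set.mem_union_right _ (by simp only [Set.mem_setOf_eq]; linarith)
  have htails : P Aᶜ ≤ ENNReal.ofReal (2 * Real.exp (-(2 * s * δ ^ 2))) := by
    calc P Aᶜ ≤ P ({ω | (s : ℝ) * p + s * δ ≤ ∑ i, Z i ω}
        ∪ {ω | ∑ i, Z i ω ≤ (s : ℝ) * p - s * δ}) := measure_mono hcompl
    _ ≤ P {ω | (s : ℝ) * p + s * δ ≤ ∑ i, Z i ω}
        + P {ω | ∑ i, Z i ω ≤ (s : ℝ) * p - s * δ} := measure_union_le _ _
    _ ≤ ENNReal.ofReal (Real.exp (-(2 * s * δ ^ 2)))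
        + ENNReal.ofReal (Real.exp (-(2 * s * δ ^ 2))) :=
          add_le_add (bits_tail_upper hmeas h01 hlaw hp0 hp1 hind hδ)
            (bits_tail_lower hmeas h01 hlaw hp0 hp1 hind hδ)
    _ = ENNReal.ofReal (2 * Real.exp (-(2 * s * δ ^ 2))) := by
        rw [← ENNReal.ofReal_add (Real.exp_pos _).le (Real.exp_pos _).le]
        ring_nf
  have hPA : P A = 1 - P Aᶜ := by
    rw [prob_compl_eq_one_sub hAmeas]
    rw [ENNReal.sub_sub_cancel ENNReal.one_ne_top prob_le_one]
  rw [hPA]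
  calc ENNReal.ofReal (1 - 2 * Real.exp (-(2 * s * δ ^ 2)))
      = ENNReal.ofReal 1 - ENNReal.ofReal (2 * Real.exp (-(2 * s * δ ^ 2))) := by
        rw [← ENNReal.ofReal_sub]
        positivity
  _ ≤ 1 - P Aᶜ := by
      rw [ENNReal.ofReal_one]
      exact tsub_le_tsub_left htails 1

end Helpers

lemma bvHash_le_one (t r x : ℝ) : bvHash t r x ≤ 1 := by
  unfold bvHash; split <;> simp

lemma hash_ne_set {t x₁ x₂ : ℝ} (hle : x₁ ≤ x₂) (hd : x₂ - x₁ ≤ 2 * t) :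
    {ρ : ℝ | bvHash t ρ x₁ ≠ bvHash t ρ x₂}
      = Set.Ico (x₁ - t) (x₂ - t) ∪ Set.Ioc (x₁ + t) (x₂ + t) := by
  ext ρ
  have key : ∀ x : ℝ, bvHash t ρ x = if x - t ≤ ρ ∧ ρ ≤ x + t then 1 else 0 := by
    intro x
    unfold bvHash
    refine if_congr ?_ rfl rfl
    simp only [Set.mem_Icc]
    constructor <;> rintro ⟨u, v⟩ <;> constructor <;> linarith
  simp only [Set.mem_setOf_eq, key, Set.mem_union, Set.mem_Ico, Set.mem_Ioc]
  by_cases hA : x₁ - t ≤ ρ ∧ ρ ≤ x₁ + t <;> by_cases hB : x₂ - t ≤ ρ ∧ ρ ≤ x₂ + t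
  · rw [if_pos hA, if_pos hB]
    simp only [ne_eq, not_true_eq_false, false_iff]
    rintro (⟨u, v⟩ | ⟨u, v⟩) <;> linarith [hA.2, hB.1]
  · rw [if_pos hA, if_neg hB]
    simp only [ne_eq, one_ne_zero, not_false_eq_true, true_iff]
    rw [not_and_or, not_le, not_le] at hB
    left
    rcases hB with h | h
    · exact ⟨by linarith [hA.1], by linarith⟩
    · exfalso; linarith [hA.2]
  · rw [if_neg hA, if_pos hB]
    simp only [ne_eq, zero_ne_one, not_false_eq_true, true_iff]
    rw [not_and_or, not_le, not_le] at hA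
    right
    rcases hA with h | h
    · exfalso; linarith [hB.1]
    · exact ⟨h, by linarith [hB.2]⟩
  · rw [if_neg hA, if_neg hB]
    simp only [ne_eq, not_true_eq_false, false_iff]
    rw [not_and_or, not_le, not_le] at hA hB
    rintro (⟨u, v⟩ | ⟨u, v⟩)
    · rcases hA with h | h
      · linarith
      · rcases hB with h2 | h2 <;> linarith
    · rcases hB with h | h
      · linarith
      · rcases hA with h2 | h2 <;> linarith

lemma hash_ne_meas {t x₁ x₂ : ℝ} (hd : |x₁ - x₂| ≤ 2 * t) :
    MeasurableSet {ρ : ℝ | bvHash t ρ x₁ ≠ bvHash t ρ x₂} := by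
  rcases le_total x₁ x₂ with hle | hle
  · rw [hash_ne_set hle (by rwa [abs_sub_comm, abs_of_nonneg (by linarith)] at hd)]
    exact (measurableSet_Ico).union measurableSet_Ioc
  · have : {ρ : ℝ | bvHash t ρ x₁ ≠ bvHash t ρ x₂}
        = {ρ : ℝ | bvHash t ρ x₂ ≠ bvHash t ρ x₁} := by
      ext ρ; simp [ne_comm]
    rw [this, hash_ne_set hle (by rwa [abs_of_nonneg (by linarith)] at hd)]
    exact (measurableSet_Ico).union measurableSet_Ioc

lemma uniform_hash_ne {L U t x₁ x₂ : ℝ} (hLU : L < U) (ht : 0 < t)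
    (hx₁ : x₁ ∈ Set.Icc L U) (hx₂ : x₂ ∈ Set.Icc L U) (hd : |x₁ - x₂| ≤ 2 * t) :
    uniformIcc (L - t) (U + t) {ρ : ℝ | bvHash t ρ x₁ ≠ bvHash t ρ x₂}
      = ENNReal.ofReal (2 * |x₁ - x₂| / (U - L + 2 * t)) := by
  have hμpos : (0:ℝ) < U - L + 2 * t := by linarith
  have aux : ∀ y z : ℝ, y ∈ Set.Icc L U → z ∈ Set.Icc L U → y ≤ z → z - y ≤ 2 * t →
      uniformIcc (L - t) (U + t) {ρ : ℝ | bvHash t ρ y ≠ bvHash t ρ z}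
        = ENNReal.ofReal (2 * (z - y) / (U - L + 2 * t)) := by
    intro y z hy hz hle hdle
    rw [hash_ne_set hle hdle]
    have hsub : Set.Ico (y - t) (z - t) ∪ Set.Ioc (y + t) (z + t)
        ⊆ Set.Icc (L - t) (U + t) := by
      rintro ρ (⟨u, v⟩ | ⟨u, v⟩) <;> constructor <;>
        [linarith [hy.1]; linarith [hz.1, hz.2]; linarith [hy.1]; linarith [hz.2]]
    have hdisj : Disjoint (Set.Ico (y - t) (z - t)) (Set.Ioc (y + t) (z + t)) := by
      rw [Set.disjoint_left]
      rintro ρ ⟨u, v⟩ ⟨u2, v2⟩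
      linarith
    rw [uniformIcc, Measure.smul_apply, Measure.restrict_apply
      ((measurableSet_Ico).union measurableSet_Ioc),
      Set.inter_eq_self_of_subset_left hsub,
      measure_union hdisj measurableSet_Ioc, Real.volume_Ico, Real.volume_Ioc]
    rw [← ENNReal.ofReal_add (by linarith) (by linarith), smul_eq_mul]
    rw [ENNReal.ofReal_div_of_pos hμpos, ENNReal.div_eq_inv_mul]
    congr 2
    · ring_nf
    · ring
  rcases le_total x₁ x₂ with hle | hle
  · rw [abs_sub_comm, abs_of_nonneg (by linarith)] at hd ⊢
    exact aux x₁ x₂ hx₁ hx₂ hle hd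
  · rw [abs_of_nonneg (by linarith)] at hd ⊢
    have : {ρ : ℝ | bvHash t ρ x₁ ≠ bvHash t ρ x₂}
        = {ρ : ℝ | bvHash t ρ x₂ ≠ bvHash t ρ x₁} := by
      ext ρ; simp [ne_comm]
    rw [this]
    exact aux x₂ x₁ hx₂ hx₁ hle hd

lemma bvHash_meas (t x : ℝ) : Measurable fun ρ => bvHash t ρ x := by
  unfold bvHash
  refine Measurable.ite ?_ measurable_const measurable_const
  have : {ρ : ℝ | x ∈ Set.Icc (ρ - t) (ρ + t)} = Set.Icc (x - t) (x + t) := by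
    ext ρ
    simp only [Set.mem_setOf_eq, Set.mem_Icc]
    constructor <;> rintro ⟨u, v⟩ <;> constructor <;> linarith
  rw [this]
  exact measurableSet_Icc

lemma dpbvBit_meas (t x : ℝ) : Measurable fun v : ℝ × ℝ => dpbvBit t v.1 x v.2 := by
  unfold dpbvBit
  refine Measurable.ite ?_ ?_ ?_
  · have : {v : ℝ × ℝ | v.2 = 1} = (fun v : ℝ × ℝ => v.2) ⁻¹' {1} := rfl
    rw [this]
    exact measurable_snd (measurableSet_singleton 1)
  · exact measurable_const.sub ((bvHash_meas t x).comp measurable_fst)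
  · exact (bvHash_meas t x).comp measurable_fst

lemma chi_meas (t x₁ x₂ : ℝ) : Measurable fun v : ℝ × ℝ × ℝ =>
    (if dpbvBit t v.1 x₁ v.2.1 ≠ dpbvBit t v.1 x₂ v.2.2 then (1:ℝ) else 0) := by
  refine Measurable.ite ?_ measurable_const measurable_const
  have h1 : Measurable fun v : ℝ × ℝ × ℝ => dpbvBit t v.1 x₁ v.2.1 :=
    (dpbvBit_meas t x₁).comp (measurable_fst.prodMk (measurable_fst.comp measurable_snd))
  have h2 : Measurable fun v : ℝ × ℝ × ℝ => dpbvBit t v.1 x₂ v.2.2 :=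
    (dpbvBit_meas t x₂).comp (measurable_fst.prodMk (measurable_snd.comp measurable_snd))
  exact (measurableSet_eq_fun h1 h2).compl

lemma indep_mono {Ω : Type*} {mΩ : MeasurableSpace Ω} {P : Measure Ω}
    {m₁ m₂ m₁' m₂' : MeasurableSpace Ω}
    (h : Indep m₁ m₂ P) (h1 : m₁' ≤ m₁) (h2 : m₂' ≤ m₂) : Indep m₁' m₂' P := by
  rw [Indep_iff] at h ⊢
  intro t1 t2 ht1 ht2
  exact h t1 t2 (h1 _ ht1) (h2 _ ht2)

section App

variable {Ω : Type*} [MeasurableSpace Ω] {P : Measure Ω} [IsProbabilityMeasure P] {s : ℕ}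
  {r f g : Fin s → Ω → ℝ}

/-- triple of indices associated to coordinate `i` -/
def tri {s : ℕ} (i : Fin s) : Finset (Fin s ⊕ (Fin s ⊕ Fin s)) :=
  {Sum.inl i, Sum.inr (Sum.inl i), Sum.inr (Sum.inr i)}

lemma tri_inj {s : ℕ} {a : Fin s ⊕ (Fin s ⊕ Fin s)} {i j : Fin s}
    (h1 : a ∈ tri i) (h2 : a ∈ tri j) : i = j := by
  simp only [tri, Finset.mem_insert, Finset.mem_singleton] at h1 h2
  rcases h1 with rfl | rfl | rfl <;> rcases h2 with h2 | h2 | h2 <;> simp_all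

lemma triple_indep
    (hr : ∀ i, Measurable (r i)) (hf : ∀ i, Measurable (f i)) (hg : ∀ i, Measurable (g i))
    (hindep : iIndepFun
      (Sum.elim r (Sum.elim f g)) P)
    {φ : Fin s → Ω → ℝ}
    (hφm : ∀ i, Measurable[MeasurableSpace.comap (r i) inferInstance
      ⊔ MeasurableSpace.comap (f i) inferInstance
      ⊔ MeasurableSpace.comap (g i) inferInstance] (φ i)) :
    ∀ (S : Finset (Fin s)), ∀ j ∉ S, IndepFun (fun ω => ∑ i ∈ S, φ i ω) (φ j) P := by
  intro S j hj
  set F := Sum.elim r (Sum.elim f g) with hF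
  set m : (Fin s ⊕ (Fin s ⊕ Fin s)) → MeasurableSpace Ω :=
    fun k => MeasurableSpace.comap (F k) inferInstance with hm
  have h_le : ∀ k, m k ≤ ‹MeasurableSpace Ω› := by
    rintro (i | i | i)
    · exact measurable_iff_comap_le.mp (hr i)
    · exact measurable_iff_comap_le.mp (hf i)
    · exact measurable_iff_comap_le.mp (hg i)
  have h_iIndep : iIndep m P := hindep.iIndep
  have hMi : ∀ (T : Finset (Fin s)) (i : Fin s), i ∈ T →
      (MeasurableSpace.comap (r i) inferInstance ⊔ MeasurableSpace.comap (f i) inferInstance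
        ⊔ MeasurableSpace.comap (g i) inferInstance)
      ≤ ⨆ k ∈ (↑(T.biUnion tri) : Set (Fin s ⊕ (Fin s ⊕ Fin s))), m k := by
    intro T i hi
    have hmem : ∀ a ∈ tri i, a ∈ T.biUnion tri :=
      fun a ha => Finset.mem_biUnion.mpr ⟨i, hi, ha⟩
    have h1 : MeasurableSpace.comap (r i) inferInstance
        ≤ ⨆ k ∈ (↑(T.biUnion tri) : Set (Fin s ⊕ (Fin s ⊕ Fin s))), m k := by
      have := le_iSup₂ (f := fun (k : Fin s ⊕ (Fin s ⊕ Fin s))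
        (_ : k ∈ (↑(T.biUnion tri) : Set (Fin s ⊕ (Fin s ⊕ Fin s)))) => m k)
        (Sum.inl i) (by simpa using hmem _ (by simp [tri]))
      exact this
    have h2 : MeasurableSpace.comap (f i) inferInstance
        ≤ ⨆ k ∈ (↑(T.biUnion tri) : Set (Fin s ⊕ (Fin s ⊕ Fin s))), m k := by
      have := le_iSup₂ (f := fun (k : Fin s ⊕ (Fin s ⊕ Fin s))
        (_ : k ∈ (↑(T.biUnion tri) : Set (Fin s ⊕ (Fin s ⊕ Fin s)))) => m k)
        (Sum.inr (Sum.inl i)) (by simpa using hmem _ (by simp [tri]))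
      exact this
    have h3 : MeasurableSpace.comap (g i) inferInstance
        ≤ ⨆ k ∈ (↑(T.biUnion tri) : Set (Fin s ⊕ (Fin s ⊕ Fin s))), m k := by
      have := le_iSup₂ (f := fun (k : Fin s ⊕ (Fin s ⊕ Fin s))
        (_ : k ∈ (↑(T.biUnion tri) : Set (Fin s ⊕ (Fin s ⊕ Fin s)))) => m k)
        (Sum.inr (Sum.inr i)) (by simpa using hmem _ (by simp [tri]))
      exact this
    exact sup_le (sup_le h1 h2) h3
  have hφM : ∀ (T : Finset (Fin s)) (i : Fin s), i ∈ T →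
      Measurable[⨆ k ∈ (↑(T.biUnion tri) : Set (Fin s ⊕ (Fin s ⊕ Fin s))), m k] (φ i) :=
    fun T i hi => (hφm i).mono (hMi T i hi) le_rfl
  have hdisj : Disjoint (↑(S.biUnion tri) : Set (Fin s ⊕ (Fin s ⊕ Fin s)))
      (↑(({j} : Finset (Fin s)).biUnion tri) : Set (Fin s ⊕ (Fin s ⊕ Fin s))) := by
    rw [Finset.disjoint_coe]
    rw [Finset.disjoint_left]
    intro a ha ha'
    obtain ⟨i, hi, hai⟩ := Finset.mem_biUnion.mp ha
    obtain ⟨j', hj', haj⟩ := Finset.mem_biUnion.mp ha'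
    rw [Finset.mem_singleton] at hj'
    subst hj'
    exact hj (tri_inj hai haj ▸ hi)
  have hindep2 := indep_iSup_of_disjoint h_le h_iIndep hdisj
  rw [IndepFun_iff_Indep]
  refine indep_mono hindep2 ?_ ?_
  · refine measurable_iff_comap_le.mp ?_
    exact Finset.measurable_sum S (fun i hi => hφM S i hi)
  · refine measurable_iff_comap_le.mp ?_
    exact hφM {j} j (Finset.mem_singleton_self j)

lemma triple_factor
    (hr : ∀ i, Measurable (r i)) (hf : ∀ i, Measurable (f i)) (hg : ∀ i, Measurable (g i))
    (hindep : iIndepFun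
      (Sum.elim r (Sum.elim f g)) P)
    (i : Fin s) {A B C : Set ℝ} (hA : MeasurableSet A) (hB : MeasurableSet B)
    (hC : MeasurableSet C) :
    P ((r i ⁻¹' A) ∩ ((f i ⁻¹' B) ∩ (g i ⁻¹' C)))
      = P (r i ⁻¹' A) * (P (f i ⁻¹' B) * P (g i ⁻¹' C)) := by
  classical
  set EΩ : (Fin s ⊕ (Fin s ⊕ Fin s)) → Set Ω := fun k =>
    match k with
    | .inl _ => r i ⁻¹' A
    | .inr (.inl _) => f i ⁻¹' B
    | .inr (.inr _) => g i ⁻¹' C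
    with hEΩ
  have key := hindep.meas_biInter (S := tri i) (s := EΩ) ?_
  · have e1 : (⋂ k ∈ tri i, EΩ k) = (r i ⁻¹' A) ∩ ((f i ⁻¹' B) ∩ (g i ⁻¹' C)) := by
      simp [tri, Finset.set_biInter_insert, hEΩ]
    have e2 : (∏ k ∈ tri i, P (EΩ k)) = P (r i ⁻¹' A) * (P (f i ⁻¹' B) * P (g i ⁻¹' C)) := by
      rw [tri, Finset.prod_insert (by simp), Finset.prod_insert (by simp),
        Finset.prod_singleton]
    rw [e1, e2] at key
    exact key
  · intro k hk
    simp only [tri, Finset.mem_insert, Finset.mem_singleton] at hk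
    rcases hk with rfl | rfl | rfl
    · exact ⟨A, hA, rfl⟩
    · exact ⟨B, hB, rfl⟩
    · exact ⟨C, hC, rfl⟩

end App

section App2
set_option maxHeartbeats 1600000
open MeasureTheory ProbabilityTheory Real
variable {Ω : Type*} [MeasurableSpace Ω] {P : Measure Ω} [IsProbabilityMeasure P] {s : ℕ}
  {r f g : Fin s → Ω → ℝ}

lemma Z_law (L U t ε x₁ x₂ : ℝ) (hLU : L < U) (ht : 0 < t) (hε : 0 < ε)
    (hx₁ : x₁ ∈ Set.Icc L U) (hx₂ : x₂ ∈ Set.Icc L U) (hd : |x₁ - x₂| ≤ 2 * t)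
    (hr : ∀ i, Measurable (r i)) (hf : ∀ i, Measurable (f i)) (hg : ∀ i, Measurable (g i))
    (hrlaw : ∀ i, Measure.map (r i) P = uniformIcc (L - t) (U + t))
    (hf01 : ∀ i ω, f i ω = 0 ∨ f i ω = 1) (hg01 : ∀ i ω, g i ω = 0 ∨ g i ω = 1)
    (hflaw : ∀ i, P {ω | f i ω = 1} = ENNReal.ofReal (1 / (exp ε + 1)))
    (hglaw : ∀ i, P {ω | g i ω = 1} = ENNReal.ofReal (1 / (exp ε + 1)))
    (hindep : iIndepFun
      (Sum.elim r (Sum.elim f g)) P)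
    (i : Fin s) :
    P {ω | (if dpbvBit t (r i ω) x₁ (f i ω) ≠ dpbvBit t (r i ω) x₂ (g i ω)
        then (1:ℝ) else 0) = 1}
      = ENNReal.ofReal ((2 * |x₁ - x₂| / (U - L + 2 * t))
            * ((1 / (exp ε + 1)) * (1 / (exp ε + 1)) + (exp ε / (exp ε + 1)) * (exp ε / (exp ε + 1)))
          + (1 - 2 * |x₁ - x₂| / (U - L + 2 * t))
            * (2 * ((1 / (exp ε + 1)) * (exp ε / (exp ε + 1))))) := by
  classical
  set e := exp ε with he
  have he1 : 1 < e := by rw [he]; exact Real.one_lt_exp_iff.mpr hε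
  set a : ℝ := 1 / (e + 1) with ha
  set b : ℝ := e / (e + 1) with hb
  set q : ℝ := 2 * |x₁ - x₂| / (U - L + 2 * t) with hq
  have hμpos : (0:ℝ) < U - L + 2 * t := by linarith
  have ha0 : 0 ≤ a := by positivity
  have hb0 : 0 ≤ b := by positivity
  have hab : b = 1 - a := by rw [ha, hb]; field_simp; ring
  have ha1 : a ≤ 1 := by rw [ha]; rw [div_le_one (by linarith)]; linarith
  have hq0 : 0 ≤ q := by positivity
  have hq1 : q ≤ 1 := by
    rw [hq, div_le_one hμpos]
    have h1 : |x₁ - x₂| ≤ 2 * t := hd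
    have h2 : |x₁ - x₂| ≤ U - L := by
      rw [abs_le]
      constructor <;> [linarith [hx₁.1, hx₂.2]; linarith [hx₁.2, hx₂.1]]
    linarith
  set Sr : Set ℝ := {ρ : ℝ | bvHash t ρ x₁ ≠ bvHash t ρ x₂} with hSr
  have hSrm : MeasurableSet Sr := hash_ne_meas hd
  set R : Set Ω := r i ⁻¹' Sr with hR
  set Rc : Set Ω := r i ⁻¹' Srᶜ with hRc
  set F1 : Set Ω := f i ⁻¹' {1} with hF1
  set F0 : Set Ω := f i ⁻¹' ({1}ᶜ) with hF0
  set G1 : Set Ω := g i ⁻¹' {1} with hG1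
  set G0 : Set Ω := g i ⁻¹' ({1}ᶜ) with hG0
  -- pointwise characterization
  have hbit : ∀ ω, (dpbvBit t (r i ω) x₁ (f i ω) ≠ dpbvBit t (r i ω) x₂ (g i ω)) ↔
      ((f i ω = 1 ∧ g i ω = 1 ∧ r i ω ∈ Sr) ∨ (¬(f i ω = 1) ∧ ¬(g i ω = 1) ∧ r i ω ∈ Sr)
        ∨ (f i ω = 1 ∧ ¬(g i ω = 1) ∧ ¬(r i ω ∈ Sr))
        ∨ (¬(f i ω = 1) ∧ g i ω = 1 ∧ ¬(r i ω ∈ Sr))) := by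
    intro ω
    have b1 := bvHash_le_one t (r i ω) x₁
    have b2 := bvHash_le_one t (r i ω) x₂
    have hmem : (r i ω ∈ Sr) ↔ bvHash t (r i ω) x₁ ≠ bvHash t (r i ω) x₂ := Iff.rfl
    rcases hf01 i ω with hφ | hφ <;> rcases hg01 i ω with hγ | hγ <;>
      simp only [dpbvBit, hφ, hγ, hmem] <;> norm_num <;> omega
  have hE : {ω | (if dpbvBit t (r i ω) x₁ (f i ω) ≠ dpbvBit t (r i ω) x₂ (g i ω)
      then (1:ℝ) else 0) = 1}
      = (R ∩ (F1 ∩ G1)) ∪ ((R ∩ (F0 ∩ G0)) ∪ ((Rc ∩ (F1 ∩ G0)) ∪ (Rc ∩ (F0 ∩ G1)))) := by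
    ext ω
    simp only [Set.mem_setOf_eq, Set.mem_union, Set.mem_inter_iff, Set.mem_preimage,
      Set.mem_singleton_iff, Set.mem_compl_iff, hR, hRc, hF1, hF0, hG1, hG0]
    have hiff : ((if dpbvBit t (r i ω) x₁ (f i ω) ≠ dpbvBit t (r i ω) x₂ (g i ω)
        then (1:ℝ) else 0) = 1) ↔ (dpbvBit t (r i ω) x₁ (f i ω) ≠ dpbvBit t (r i ω) x₂ (g i ω)) := by
      constructor
      · intro h
        by_contra hc
        rw [if_neg (not_not_intro hc)] at h
        norm_num at h
      · intro h
        rw [if_pos h]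
    rw [hiff, hbit ω]
    tauto
  -- measures of atomic events
  have hPR : P R = ENNReal.ofReal q := by
    rw [hR, ← Measure.map_apply (hr i) hSrm, hrlaw i, hSr,
      uniform_hash_ne hLU ht hx₁ hx₂ hd]
  have hPRc : P Rc = ENNReal.ofReal (1 - q) := by
    rw [hRc, Set.preimage_compl, prob_compl_eq_one_sub ((hr i) hSrm), hPR,
      ENNReal.ofReal_sub 1 hq0, ENNReal.ofReal_one]
  have hsetF : F1 = {ω | f i ω = 1} := rfl
  have hPF1 : P F1 = ENNReal.ofReal a := by rw [hsetF, hflaw i]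
  have hPF0 : P F0 = ENNReal.ofReal b := by
    rw [hF0, Set.preimage_compl, prob_compl_eq_one_sub ((hf i) (measurableSet_singleton 1)),
      show (f i ⁻¹' {1}) = {ω | f i ω = 1} from rfl, hflaw i, hab,
      ENNReal.ofReal_sub 1 ha0, ENNReal.ofReal_one]
  have hsetG : G1 = {ω | g i ω = 1} := rfl
  have hPG1 : P G1 = ENNReal.ofReal a := by rw [hsetG, hglaw i]
  have hPG0 : P G0 = ENNReal.ofReal b := by
    rw [hG0, Set.preimage_compl, prob_compl_eq_one_sub ((hg i) (measurableSet_singleton 1)),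
      show (g i ⁻¹' {1}) = {ω | g i ω = 1} from rfl, hglaw i, hab,
      ENNReal.ofReal_sub 1 ha0, ENNReal.ofReal_one]
  -- measurability of pieces
  have hmR : MeasurableSet R := (hr i) hSrm
  have hmRc : MeasurableSet Rc := (hr i) hSrm.compl
  have hmF1 : MeasurableSet F1 := (hf i) (measurableSet_singleton 1)
  have hmF0 : MeasurableSet F0 := (hf i) (measurableSet_singleton 1).compl
  have hmG1 : MeasurableSet G1 := (hg i) (measurableSet_singleton 1)
  have hmG0 : MeasurableSet G0 := (hg i) (measurableSet_singleton 1).compl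
  -- disjointness
  have hFdis : Disjoint F1 F0 := by
    rw [hF1, hF0]
    exact Set.disjoint_left.mpr (fun ω h1 h0 => h0 h1)
  have hRdis : Disjoint R Rc := by
    rw [hR, hRc]
    exact Set.disjoint_left.mpr (fun ω h1 h0 => h0 h1)
  have d12 : Disjoint (R ∩ (F1 ∩ G1)) (R ∩ (F0 ∩ G0)) :=
    hFdis.mono (Set.inter_subset_right.trans Set.inter_subset_left)
      (Set.inter_subset_right.trans Set.inter_subset_left)
  have d13 : Disjoint (R ∩ (F1 ∩ G1)) (Rc ∩ (F1 ∩ G0)) :=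
    hRdis.mono Set.inter_subset_left Set.inter_subset_left
  have d14 : Disjoint (R ∩ (F1 ∩ G1)) (Rc ∩ (F0 ∩ G1)) :=
    hRdis.mono Set.inter_subset_left Set.inter_subset_left
  have d23 : Disjoint (R ∩ (F0 ∩ G0)) (Rc ∩ (F1 ∩ G0)) :=
    hRdis.mono Set.inter_subset_left Set.inter_subset_left
  have d24 : Disjoint (R ∩ (F0 ∩ G0)) (Rc ∩ (F0 ∩ G1)) :=
    hRdis.mono Set.inter_subset_left Set.inter_subset_left
  have d34 : Disjoint (Rc ∩ (F1 ∩ G0)) (Rc ∩ (F0 ∩ G1)) :=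
    hFdis.mono (Set.inter_subset_right.trans Set.inter_subset_left)
      (Set.inter_subset_right.trans Set.inter_subset_left)
  -- measures of the four pieces
  have h1 : P (R ∩ (F1 ∩ G1)) = P R * (P F1 * P G1) :=
    triple_factor hr hf hg hindep i hSrm (measurableSet_singleton 1)
      (measurableSet_singleton 1)
  have h2 : P (R ∩ (F0 ∩ G0)) = P R * (P F0 * P G0) :=
    triple_factor hr hf hg hindep i hSrm (measurableSet_singleton 1).compl
      (measurableSet_singleton 1).compl
  have h3 : P (Rc ∩ (F1 ∩ G0)) = P Rc * (P F1 * P G0) :=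
    triple_factor hr hf hg hindep i hSrm.compl (measurableSet_singleton 1)
      (measurableSet_singleton 1).compl
  have h4 : P (Rc ∩ (F0 ∩ G1)) = P Rc * (P F0 * P G1) :=
    triple_factor hr hf hg hindep i hSrm.compl (measurableSet_singleton 1).compl
      (measurableSet_singleton 1)
  -- combine
  rw [hE]
  rw [measure_union (d12.union_right (d13.union_right d14))
    (((hmR.inter (hmF0.inter hmG0)).union
      ((hmRc.inter (hmF1.inter hmG0)).union (hmRc.inter (hmF0.inter hmG1)))))]
  rw [measure_union (d23.union_right d24)
    ((hmRc.inter (hmF1.inter hmG0)).union (hmRc.inter (hmF0.inter hmG1)))]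
  rw [measure_union d34 (hmRc.inter (hmF0.inter hmG1))]
  rw [h1, h2, h3, h4, hPR, hPRc, hPF1, hPF0, hPG1, hPG0]
  have hq1' : (0:ℝ) ≤ 1 - q := by linarith
  rw [← ENNReal.ofReal_mul ha0, ← ENNReal.ofReal_mul hq0,
    ← ENNReal.ofReal_mul hb0, ← ENNReal.ofReal_mul hq0,
    ← ENNReal.ofReal_mul ha0, ← ENNReal.ofReal_mul hq1',
    ← ENNReal.ofReal_mul hb0, ← ENNReal.ofReal_mul hq1']
  rw [← ENNReal.ofReal_add (by positivity) (by positivity),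
    ← ENNReal.ofReal_add (by positivity) (by positivity),
    ← ENNReal.ofReal_add (by positivity) (by positivity)]
  congr 1
  ring

end App2


/-- (Error bound of distance estimation) For `L < U`, `t > 0`, `ε > 0`, `β ∈ (0, 2)`,
`μ = U - L + 2t`, with `r 0, …, r (s-1)` i.i.d. uniform on `[L - t, U + t]`, flip indicators
`f i, g i ∈ {0,1}` each equal to `1` with probability `1/(e^ε + 1)`, all mutually independent,
and `x₁, x₂ ∈ [L, U]` with `d_E = |x₁ - x₂| ≤ 2t`, with probability at least `1 − β` we have
`|d̂_E − d_E| ≤ (μ/2) · ((e^ε + 1)/(e^ε − 1))² · √(ln(2/β)/(2s))`. -/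
theorem dpbv_estimator_error_bound
    {Ω : Type*} [MeasurableSpace Ω] (P : Measure Ω) [IsProbabilityMeasure P]
    (L U t μ ε β : ℝ) (hLU : L < U) (ht : 0 < t) (hε : 0 < ε) (hβ : β ∈ Set.Ioo (0 : ℝ) 2)
    (hμ : μ = U - L + 2 * t)
    (s : ℕ) (hs : 1 ≤ s) (r f g : Fin s → Ω → ℝ)
    (hr : ∀ i, Measurable (r i)) (hf : ∀ i, Measurable (f i)) (hg : ∀ i, Measurable (g i))
    (hrlaw : ∀ i, Measure.map (r i) P = uniformIcc (L - t) (U + t))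
    (hf01 : ∀ i ω, f i ω = 0 ∨ f i ω = 1) (hg01 : ∀ i ω, g i ω = 0 ∨ g i ω = 1)
    (hflaw : ∀ i, P {ω | f i ω = 1} = ENNReal.ofReal (1 / (exp ε + 1)))
    (hglaw : ∀ i, P {ω | g i ω = 1} = ENNReal.ofReal (1 / (exp ε + 1)))
    (hindep : iIndepFun
      (Sum.elim r (Sum.elim f g)) P)
    (x₁ x₂ : ℝ) (hx₁ : x₁ ∈ Set.Icc L U) (hx₂ : x₂ ∈ Set.Icc L U)
    (hd : |x₁ - x₂| ≤ 2 * t) :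
    ENNReal.ofReal (1 - β)
      ≤ P {ω | abs (dpbvEstimator t μ ε r f g x₁ x₂ ω - |x₁ - x₂|)
          ≤ μ / 2 * ((exp ε + 1) / (exp ε - 1)) ^ 2 * Real.sqrt (Real.log (2 / β) / (2 * s))} := by
    classical
  have he1 : 1 < exp ε := Real.one_lt_exp_iff.mpr hε
  have hspos : (0:ℝ) < (s:ℝ) := by
    have h0 : 0 < s := lt_of_lt_of_le Nat.zero_lt_one hs
    exact_mod_cast h0
  have hsne : (s:ℝ) ≠ 0 := ne_of_gt hspos
  subst hμ
  have hμpos : (0:ℝ) < U - L + 2 * t := by linarith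
  have hMne : U - L + 2 * t ≠ 0 := ne_of_gt hμpos
  have hene : exp ε - 1 ≠ 0 := by linarith
  have hepe : exp ε + 1 ≠ 0 := by positivity
  set Z : Fin s → Ω → ℝ := fun i ω =>
    if dpbvBit t (r i ω) x₁ (f i ω) ≠ dpbvBit t (r i ω) x₂ (g i ω) then (1:ℝ) else 0 with hZ
  have hZmeas : ∀ i, Measurable (Z i) := by
    intro i
    have hcomp : Z i = (fun v : ℝ × ℝ × ℝ =>
        (if dpbvBit t v.1 x₁ v.2.1 ≠ dpbvBit t v.1 x₂ v.2.2 then (1:ℝ) else 0))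
        ∘ (fun ω => (r i ω, f i ω, g i ω)) := rfl
    rw [hcomp]
    exact (chi_meas t x₁ x₂).comp ((hr i).prodMk ((hf i).prodMk (hg i)))
  have hZ01 : ∀ i ω, Z i ω = 0 ∨ Z i ω = 1 := by
    intro i ω
    by_cases h : dpbvBit t (r i ω) x₁ (f i ω) ≠ dpbvBit t (r i ω) x₂ (g i ω)
    · right; simp only [hZ, if_pos h]
    · left; simp only [hZ, if_neg h]
  have hZlaw : ∀ i, P {ω | Z i ω = 1} = ENNReal.ofReal ((2 * |x₁ - x₂| / (U - L + 2 * t)) * ((1 / (exp ε + 1)) * (1 / (exp ε + 1)) + (exp ε / (exp ε + 1)) * (exp ε / (exp ε + 1))) + (1 - (2 * |x₁ - x₂| / (U - L + 2 * t))) * (2 * ((1 / (exp ε + 1)) * (exp ε / (exp ε + 1))))) :=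
    fun i => Z_law L U t ε x₁ x₂ hLU ht hε hx₁ hx₂ hd hr hf hg hrlaw hf01 hg01 hflaw hglaw
      hindep i
  have ha0 : (0:ℝ) ≤ (1 / (exp ε + 1)) := by positivity
  have hb0 : (0:ℝ) ≤ (exp ε / (exp ε + 1)) := by positivity
  have hq0 : (0:ℝ) ≤ (2 * |x₁ - x₂| / (U - L + 2 * t)) := by positivity
  have hq1 : (2 * |x₁ - x₂| / (U - L + 2 * t)) ≤ 1 := by
    rw [div_le_one hμpos]
    have h2 : |x₁ - x₂| ≤ U - L := by
      rw [abs_le]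
      constructor
      · linarith [hx₁.1, hx₂.2]
      · linarith [hx₁.2, hx₂.1]
    linarith
  have hab1 : (1 / (exp ε + 1)) + (exp ε / (exp ε + 1)) = 1 := by
    rw [← add_div, add_comm (1:ℝ) (exp ε), div_self hepe]
  have hX1 : (1 / (exp ε + 1)) * (1 / (exp ε + 1)) + (exp ε / (exp ε + 1)) * (exp ε / (exp ε + 1)) ≤ 1 := by nlinarith [mul_nonneg ha0 hb0]
  have hY1 : 2 * ((1 / (exp ε + 1)) * (exp ε / (exp ε + 1))) ≤ 1 := by nlinarith [sq_nonneg ((1 / (exp ε + 1)) - (exp ε / (exp ε + 1)))]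
  have hp0 : (0:ℝ) ≤ ((2 * |x₁ - x₂| / (U - L + 2 * t)) * ((1 / (exp ε + 1)) * (1 / (exp ε + 1)) + (exp ε / (exp ε + 1)) * (exp ε / (exp ε + 1))) + (1 - (2 * |x₁ - x₂| / (U - L + 2 * t))) * (2 * ((1 / (exp ε + 1)) * (exp ε / (exp ε + 1))))) := by
    have t1 : (0:ℝ) ≤ (2 * |x₁ - x₂| / (U - L + 2 * t)) * ((1 / (exp ε + 1)) * (1 / (exp ε + 1)) + (exp ε / (exp ε + 1)) * (exp ε / (exp ε + 1))) :=
      mul_nonneg hq0 (by positivity)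
    have t2 : (0:ℝ) ≤ (1 - (2 * |x₁ - x₂| / (U - L + 2 * t))) * (2 * ((1 / (exp ε + 1)) * (exp ε / (exp ε + 1)))) :=
      mul_nonneg (by linarith) (by positivity)
    linarith
  have hp1 : ((2 * |x₁ - x₂| / (U - L + 2 * t)) * ((1 / (exp ε + 1)) * (1 / (exp ε + 1)) + (exp ε / (exp ε + 1)) * (exp ε / (exp ε + 1))) + (1 - (2 * |x₁ - x₂| / (U - L + 2 * t))) * (2 * ((1 / (exp ε + 1)) * (exp ε / (exp ε + 1))))) ≤ 1 := by nlinarith [hq0, hq1, hX1, hY1]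
  have hφm : ∀ i, Measurable[MeasurableSpace.comap (r i) inferInstance
      ⊔ MeasurableSpace.comap (f i) inferInstance
      ⊔ MeasurableSpace.comap (g i) inferInstance] (Z i) := by
    intro i
    have hrm : Measurable[MeasurableSpace.comap (r i) inferInstance
        ⊔ MeasurableSpace.comap (f i) inferInstance
        ⊔ MeasurableSpace.comap (g i) inferInstance] (r i) :=
      measurable_iff_comap_le.mpr (le_sup_left.trans le_sup_left)
    have hfm : Measurable[MeasurableSpace.comap (r i) inferInstance
        ⊔ MeasurableSpace.comap (f i) inferInstance
        ⊔ MeasurableSpace.comap (g i) inferInstance] (f i) :=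
      measurable_iff_comap_le.mpr (le_sup_right.trans le_sup_left)
    have hgm : Measurable[MeasurableSpace.comap (r i) inferInstance
        ⊔ MeasurableSpace.comap (f i) inferInstance
        ⊔ MeasurableSpace.comap (g i) inferInstance] (g i) :=
      measurable_iff_comap_le.mpr le_sup_right
    have hcomp : Z i = (fun v : ℝ × ℝ × ℝ =>
        (if dpbvBit t v.1 x₁ v.2.1 ≠ dpbvBit t v.1 x₂ v.2.2 then (1:ℝ) else 0))
        ∘ (fun ω => (r i ω, f i ω, g i ω)) := rfl
    rw [hcomp]
    exact (chi_meas t x₁ x₂).comp (hrm.prodMk (hfm.prodMk hgm))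
  have hind := triple_indep hr hf hg hindep hφm
  have hconc := bits_concentration (P := P) hZmeas hZ01 hZlaw hp0 hp1 hind
    (Real.sqrt_nonneg (Real.log (2 / β) / (2 * (s:ℝ))))
  have hln0 : 0 ≤ Real.log (2 / β) := by
    apply Real.log_nonneg
    rw [le_div_iff₀ hβ.1]
    linarith [hβ.2]
  have hδsq : 2 * (s:ℝ) * (Real.sqrt (Real.log (2 / β) / (2 * (s:ℝ)))) ^ 2 = Real.log (2 / β) := by
    rw [Real.sq_sqrt (div_nonneg hln0 (by positivity))]
    field_simp
  have hexp : 2 * Real.exp (-(2 * (s:ℝ) * (Real.sqrt (Real.log (2 / β) / (2 * (s:ℝ)))) ^ 2)) = β := by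
    rw [hδsq, Real.exp_neg, Real.exp_log (div_pos two_pos hβ.1), inv_div]
    field_simp
  have hCpos : (0:ℝ) < (U - L + 2 * t) / (2 * (s:ℝ)) * ((exp ε + 1) / (exp ε - 1)) ^ 2 := by
    have hb2 : (0:ℝ) < (exp ε + 1) / (exp ε - 1) := div_pos (by linarith) (by linarith)
    have hb3 := pow_pos hb2 2
    positivity
  have hkey : (U - L + 2 * t) / (2 * (s:ℝ)) * ((exp ε + 1) / (exp ε - 1)) ^ 2 * ((s:ℝ) * ((2 * |x₁ - x₂| / (U - L + 2 * t)) * ((1 / (exp ε + 1)) * (1 / (exp ε + 1)) + (exp ε / (exp ε + 1)) * (exp ε / (exp ε + 1))) + (1 - (2 * |x₁ - x₂| / (U - L + 2 * t))) * (2 * ((1 / (exp ε + 1)) * (exp ε / (exp ε + 1))))))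
      - (U - L + 2 * t) * exp ε / (exp ε - 1) ^ 2 = |x₁ - x₂| := by
    field_simp
    ring
  have hCs : (U - L + 2 * t) / 2 * ((exp ε + 1) / (exp ε - 1)) ^ 2 * Real.sqrt (Real.log (2 / β) / (2 * (s:ℝ)))
      = (U - L + 2 * t) / (2 * (s:ℝ)) * ((exp ε + 1) / (exp ε - 1)) ^ 2 * ((s:ℝ) * Real.sqrt (Real.log (2 / β) / (2 * (s:ℝ)))) := by
    field_simp
  have hev : {ω | abs (dpbvEstimator t (U - L + 2 * t) ε r f g x₁ x₂ ω - |x₁ - x₂|)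
        ≤ (U - L + 2 * t) / 2 * ((exp ε + 1) / (exp ε - 1)) ^ 2 * Real.sqrt (Real.log (2 / β) / (2 * (s:ℝ)))}
      = {ω | |(∑ i, Z i ω) - (s:ℝ) * ((2 * |x₁ - x₂| / (U - L + 2 * t)) * ((1 / (exp ε + 1)) * (1 / (exp ε + 1)) + (exp ε / (exp ε + 1)) * (exp ε / (exp ε + 1))) + (1 - (2 * |x₁ - x₂| / (U - L + 2 * t))) * (2 * ((1 / (exp ε + 1)) * (exp ε / (exp ε + 1)))))| ≤ (s:ℝ) * Real.sqrt (Real.log (2 / β) / (2 * (s:ℝ)))} := by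
    ext ω
    simp only [Set.mem_setOf_eq]
    rw [dpbvEstimator]
    have hham : (dpbvHammingDist t r f g x₁ x₂ ω : ℝ) = ∑ i, Z i ω := by
      rw [dpbvHammingDist, Finset.card_filter]
      push_cast
      rfl
    rw [hham]
    have hlin : (U - L + 2 * t) / (2 * (s:ℝ)) * ((exp ε + 1) / (exp ε - 1)) ^ 2 * (∑ i, Z i ω)
        - (U - L + 2 * t) * exp ε / (exp ε - 1) ^ 2 - |x₁ - x₂|
        = (U - L + 2 * t) / (2 * (s:ℝ)) * ((exp ε + 1) / (exp ε - 1)) ^ 2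
          * ((∑ i, Z i ω) - (s:ℝ) * ((2 * |x₁ - x₂| / (U - L + 2 * t)) * ((1 / (exp ε + 1)) * (1 / (exp ε + 1)) + (exp ε / (exp ε + 1)) * (exp ε / (exp ε + 1))) + (1 - (2 * |x₁ - x₂| / (U - L + 2 * t))) * (2 * ((1 / (exp ε + 1)) * (exp ε / (exp ε + 1)))))) := by
      linear_combination hkey
    rw [hlin, abs_mul, abs_of_pos hCpos, hCs]
    exact mul_le_mul_iff_of_pos_left hCpos
  calc ENNReal.ofReal (1 - β)
      = ENNReal.ofReal (1 - 2 * Real.exp (-(2 * (s:ℝ) * (Real.sqrt (Real.log (2 / β) / (2 * (s:ℝ)))) ^ 2))) := by rw [hexp]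
    _ ≤ P {ω | |(∑ i, Z i ω) - (s:ℝ) * ((2 * |x₁ - x₂| / (U - L + 2 * t)) * ((1 / (exp ε + 1)) * (1 / (exp ε + 1)) + (exp ε / (exp ε + 1)) * (exp ε / (exp ε + 1))) + (1 - (2 * |x₁ - x₂| / (U - L + 2 * t))) * (2 * ((1 / (exp ε + 1)) * (exp ε / (exp ε + 1)))))| ≤ (s:ℝ) * Real.sqrt (Real.log (2 / β) / (2 * (s:ℝ)))} := hconc
    _ = P {ω | abs (dpbvEstimator t (U - L + 2 * t) ε r f g x₁ x₂ ω - |x₁ - x₂|)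
        ≤ (U - L + 2 * t) / 2 * ((exp ε + 1) / (exp ε - 1)) ^ 2 * Real.sqrt (Real.log (2 / β) / (2 * (s:ℝ)))} := by rw [hev]
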